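/- If {(X_i,Y_i)}_{i≥1} are i.i.d. and S is a permutation invariant stopping time with respect to {X_i}, then S is a permutation invariant (randomized) stopping time with respect to {Y_i}: P(S ≤ n | Y^n = y^n) = P(S ≤ n | Y^n = π(y^n)) for all n, y^n, and coordinate permutations π. -/

import Mathlib

open Finset
open scoped Classical

noncomputable section

variable {Ω : Type*} [Fintype Ω] {𝒳 : Type*} {𝒴 : Type*}

/-- Probability of an event under weights `p` on a finite sample space. -/
def prW (p : Ω → ℝ) (A : Ω → Prop) : ℝ := ∑ ω, if A ω then p ω else 0

/-- Expectation under weights `p`. -/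
def exW (p : Ω → ℝ) (f : Ω → ℝ) : ℝ := ∑ ω, p ω * f ω

/-- `p` is a probability weight function. -/
def IsProbW (p : Ω → ℝ) : Prop := (∀ ω, 0 ≤ p ω) ∧ ∑ ω, p ω = 1

/-- Conditional probability `P(A | B)`. -/
def cprW (p : Ω → ℝ) (A B : Ω → Prop) : ℝ := prW p (fun ω => A ω ∧ B ω) / prW p B

/-- Conditional expectation `E(f | B)`. -/
def cexW (p : Ω → ℝ) (f : Ω → ℝ) (B : Ω → Prop) : ℝ :=
  (∑ ω, if B ω then p ω * f ω else 0) / prW p B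

/-- positive part of a real number -/
def posP (x : ℝ) : ℝ := max x 0

/-- `S` is a (non-randomized) stopping time w.r.t. the process `X` (time starts at 1):
its value is determined by the observations up to itself. -/
def IsSTW (X : ℕ → Ω → 𝒳) (S : Ω → ℕ) : Prop :=
  ∀ ω ω', (∀ i, 1 ≤ i → i ≤ S ω → X i ω = X i ω') → S ω' = S ω

/-- The path of the process `Y` at sample `ω`. -/
def pathOf (Y : ℕ → Ω → 𝒴) (ω : Ω) : ℕ → 𝒴 := fun i => Y i ω

/-- The path `f` extends (passes through) the node `y` (a finite string). -/
def ExtN (y : List 𝒴) (f : ℕ → 𝒴) : Prop := ∀ i : Fin y.length, f (i.1 + 1) = y.get i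

/-- A stopping function on paths: its value depends only on the path up to that value.
This is the path-representation of a non-randomized stopping time (a tree). -/
def IsStopFun (t : (ℕ → 𝒴) → ℕ) : Prop :=
  ∀ f g, (∀ i, 1 ≤ i → i ≤ t f → f i = g i) → t g = t f

/-- `y` is an internal node of the tree `t`. -/
def InternalNode (t : (ℕ → 𝒴) → ℕ) (y : List 𝒴) : Prop :=
  ∀ f, ExtN y f → y.length < t f

/-- `u` is (the stopping function of) a subtree rooted at node `y`. -/
def IsSubtreeAt (y : List 𝒴) (u : (ℕ → 𝒴) → ℕ) : Prop :=
  IsStopFun u ∧ ∀ f, ExtN y f → y.length ≤ u f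

/-- false-alarm weight `a(y)` of node `y` -/
def aW (p : Ω → ℝ) (Y : ℕ → Ω → 𝒴) (S : Ω → ℕ) (y : List 𝒴) : ℝ :=
  prW p (fun ω => ExtN y (pathOf Y ω) ∧ y.length < S ω)

/-- delay weight `b(y)` of node `y` -/
def bW (p : Ω → ℝ) (Y : ℕ → Ω → 𝒴) (S : Ω → ℕ) (y : List 𝒴) : ℝ :=
  exW p (fun ω => if ExtN y (pathOf Y ω) then posP ((y.length : ℝ) - (S ω : ℝ)) else 0)

/-- false-alarm weight `a(T_y)` of a subtree `u` rooted at `y` (the sum of `a(γ)`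
over its leaves `γ`). -/
def aSubW (p : Ω → ℝ) (Y : ℕ → Ω → 𝒴) (S : Ω → ℕ) (y : List 𝒴) (u : (ℕ → 𝒴) → ℕ) : ℝ :=
  prW p (fun ω => ExtN y (pathOf Y ω) ∧ u (pathOf Y ω) < S ω)

/-- delay weight `b(T_y)` of a subtree `u` rooted at `y` (the sum of `b(γ)` over its leaves). -/
def bSubW (p : Ω → ℝ) (Y : ℕ → Ω → 𝒴) (S : Ω → ℕ) (y : List 𝒴) (u : (ℕ → 𝒴) → ℕ) : ℝ :=
  exW p (fun ω => if ExtN y (pathOf Y ω) then posP ((u (pathOf Y ω) : ℝ) - (S ω : ℝ)) else 0)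

/-- Lagrangian cost `J_λ(T_y)` of the subtree `u` rooted at `y`. -/
def JsubW (p : Ω → ℝ) (Y : ℕ → Ω → 𝒴) (S : Ω → ℕ) (lam : ℝ) (y : List 𝒴)
    (u : (ℕ → 𝒴) → ℕ) : ℝ :=
  bSubW p Y S y u + lam * aSubW p Y S y u

/-- Lagrangian cost `J_λ(y)` of the single node `y`. -/
def JnodeW (p : Ω → ℝ) (Y : ℕ → Ω → 𝒴) (S : Ω → ℕ) (lam : ℝ) (y : List 𝒴) : ℝ :=
  bW p Y S y + lam * aW p Y S y

/-- `u` is the smallest minimal-cost rooted subtree `T_y(λ)` of `t` at node `y`,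
for Lagrange multiplier `lam`. -/
def IsOptSubtreeAt (p : Ω → ℝ) (Y : ℕ → Ω → 𝒴) (S : Ω → ℕ) (lam : ℝ)
    (t : (ℕ → 𝒴) → ℕ) (y : List 𝒴) (u : (ℕ → 𝒴) → ℕ) : Prop :=
  IsSubtreeAt y u ∧ (∀ f, ExtN y f → u f ≤ t f) ∧
  (∀ v, IsSubtreeAt y v → (∀ f, ExtN y f → v f ≤ t f) →
    JsubW p Y S lam y u ≤ JsubW p Y S lam y v) ∧
  (∀ v, IsSubtreeAt y v → (∀ f, ExtN y f → v f ≤ t f) →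
    JsubW p Y S lam y v = JsubW p Y S lam y u → ∀ f, ExtN y f → u f ≤ v f)

/-- the tradeoff quantity `g(y, T) = (b(T_y) - b(y)) / (a(y) - a(T_y))`
(with the convention 0/0 = 0, which holds automatically for real division). -/
def gW (p : Ω → ℝ) (Y : ℕ → Ω → 𝒴) (S : Ω → ℕ) (t : (ℕ → 𝒴) → ℕ) (y : List 𝒴) : ℝ :=
  (bSubW p Y S y t - bW p Y S y) / (aW p Y S y - aSubW p Y S y t)

/-- node permuted by a coordinate permutation -/
def permNode (y : List 𝒴) (π : Equiv.Perm (Fin y.length)) : List 𝒴 :=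
  List.ofFn fun i => y.get (π i)

/-- permutation invariance of a stopping time w.r.t. process `Y`:
`P(T ≤ n | Y^n = y^n) = P(T ≤ n | Y^n = π(y^n))`. -/
def PermInvST (p : Ω → ℝ) (Y : ℕ → Ω → 𝒴) (T : Ω → ℕ) (κ : ℕ) : Prop :=
  ∀ y : List 𝒴, y.length ≤ κ → ∀ π : Equiv.Perm (Fin y.length),
    cprW p (fun ω => T ω ≤ y.length) (fun ω => ExtN y (pathOf Y ω)) =
    cprW p (fun ω => T ω ≤ y.length) (fun ω => ExtN (permNode y π) (pathOf Y ω))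

/-- the pairs `(X_i, Y_i)` are i.i.d. (over the first `κ` time steps). -/
def IIDPairs [Fintype 𝒳] [Fintype 𝒴] (p : Ω → ℝ) (X : ℕ → Ω → 𝒳) (Y : ℕ → Ω → 𝒴)
    (κ : ℕ) : Prop :=
  ∃ μ : 𝒳 × 𝒴 → ℝ, (∀ z, 0 ≤ μ z) ∧ (∑ z, μ z = 1) ∧
    ∀ (x : ℕ → 𝒳) (yf : ℕ → 𝒴),
      prW p (fun ω => ∀ i, 1 ≤ i → i ≤ κ → X i ω = x i ∧ Y i ω = yf i) =
        ∏ i ∈ Finset.Icc 1 κ, μ (x i, yf i)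

/-- a randomized stopping time bounded by `κ`, given by its conditional stopping
kernel `q n y^n = P(T = n | Y^n = y^n)`. -/
def IsRandST (q : ℕ → (ℕ → 𝒴) → ℝ) (κ : ℕ) : Prop :=
  (∀ n f, 0 ≤ q n f) ∧
  (∀ n f g, (∀ i, 1 ≤ i → i ≤ n → f i = g i) → q n g = q n f) ∧
  (∀ f, ∑ n ∈ Finset.Icc 1 κ, q n f = 1)

/-- false-alarm probability `P(T < S)` of a randomized stopping time -/
def faR (p : Ω → ℝ) (Y : ℕ → Ω → 𝒴) (S : Ω → ℕ) (κ : ℕ) (q : ℕ → (ℕ → 𝒴) → ℝ) : ℝ :=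
  exW p (fun ω => ∑ n ∈ Finset.Icc 1 κ, q n (pathOf Y ω) * (if n < S ω then 1 else 0))

/-- expected reaction delay `E(T - S)⁺` of a randomized stopping time -/
def delayR (p : Ω → ℝ) (Y : ℕ → Ω → 𝒴) (S : Ω → ℕ) (κ : ℕ) (q : ℕ → (ℕ → 𝒴) → ℝ) : ℝ :=
  exW p (fun ω => ∑ n ∈ Finset.Icc 1 κ, q n (pathOf Y ω) * posP ((n : ℝ) - (S ω : ℝ)))

/-- the optimal tradeoff curve `d(α)` -/
def dW (p : Ω → ℝ) (Y : ℕ → Ω → 𝒴) (S : Ω → ℕ) (κ : ℕ) (α : ℝ) : ℝ :=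
  sInf {v | ∃ q, IsRandST q κ ∧ faR p Y S κ q ≤ α ∧ v = delayR p Y S κ q}

/-- the stopping kernel of a non-randomized stopping function -/
def detKer (t : (ℕ → 𝒴) → ℕ) : ℕ → (ℕ → 𝒴) → ℝ := fun n f => if t f = n then 1 else 0

/-- prefix of length `n` of a path (the node of depth `n` it visits) -/
def prefixOf (f : ℕ → 𝒴) (n : ℕ) : List 𝒴 := (List.range n).map fun i => f (i + 1)

/-- the one-step-lookahead node cost `c(y^n)` -/
def cnodeW (p : Ω → ℝ) (Y : ℕ → Ω → 𝒴) (S : Ω → ℕ) (lam : ℝ) (y : List 𝒴) : ℝ :=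
  cexW p (fun ω => posP ((y.length : ℝ) - (S ω : ℝ))) (fun ω => ExtN y (pathOf Y ω)) +
    lam * cprW p (fun ω => y.length < S ω) (fun ω => ExtN y (pathOf Y ω))

end


section PermInvHelpers

open Finset
open scoped Classical

variable {Ω : Type*} [Fintype Ω] {𝒳 : Type*} {𝒴 : Type*}

/-- event: the process `X` matches `u` on steps `1..n`. -/
def EqFn (X : ℕ → Ω → 𝒳) {n : ℕ} (u : Fin n → 𝒳) (ω : Ω) : Prop :=
  ∀ i : Fin n, X (i.1 + 1) ω = u i

lemma prW_congr' (p : Ω → ℝ) {A B : Ω → Prop} (h : ∀ ω, A ω ↔ B ω) :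
    prW p A = prW p B :=
  Finset.sum_congr rfl fun ω _ => by simp [h ω]

lemma cprW_congr' (p : Ω → ℝ) {A A' B B' : Ω → Prop}
    (hA : ∀ ω, A ω ↔ A' ω) (hB : ∀ ω, B ω ↔ B' ω) :
    cprW p A B = cprW p A' B' := by
  unfold cprW
  rw [prW_congr' p hB, prW_congr' p (fun ω => and_congr (hA ω) (hB ω))]

lemma prW_partition' [Fintype 𝒳] (p : Ω → ℝ) (X : ℕ → Ω → 𝒳) (n : ℕ) (E : Ω → Prop) :
    prW p E = ∑ u : Fin n → 𝒳, prW p (fun ω => E ω ∧ EqFn X u ω) := by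
  unfold prW
  rw [Finset.sum_comm]
  refine Finset.sum_congr rfl fun ω _ => ?_
  by_cases hE : E ω
  · have h1 : ∀ u : Fin n → 𝒳, (E ω ∧ EqFn X u ω) ↔ u = fun i => X (i.1 + 1) ω := by
      intro u
      constructor
      · rintro ⟨-, h⟩; funext i; exact (h i).symm
      · rintro rfl; exact ⟨hE, fun i => rfl⟩
    simp only [h1]
    rw [Finset.sum_ite_eq' univ (fun i : Fin n => X (i.1 + 1) ω) (fun _ => p ω)]
    simp [hE]
  · simp [hE]

/-- `S ≤ n` holds on the whole atom `{X^n = u}`. -/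
def stopInd (X : ℕ → Ω → 𝒳) (S : Ω → ℕ) (n : ℕ) (u : Fin n → 𝒳) : Prop :=
  ∀ ω, EqFn X u ω → S ω ≤ n

lemma prW_stop_factor (p : Ω → ℝ) (X : ℕ → Ω → 𝒳) (S : Ω → ℕ)
    (hS : IsSTW X S) (n : ℕ) (u : Fin n → 𝒳) (B : Ω → Prop) :
    prW p (fun ω => S ω ≤ n ∧ EqFn X u ω ∧ B ω)
      = (if stopInd X S n u then (1:ℝ) else 0) * prW p (fun ω => EqFn X u ω ∧ B ω) := by
  by_cases h : stopInd X S n u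
  · rw [if_pos h, one_mul]
    exact prW_congr' p fun ω => ⟨fun h2 => h2.2, fun h2 => ⟨h ω h2.1, h2⟩⟩
  · rw [if_neg h, zero_mul]
    unfold stopInd at h
    push_neg at h
    obtain ⟨ω₀, h0, hgt⟩ := h
    have hfalse : ∀ ω, ¬ (S ω ≤ n ∧ EqFn X u ω ∧ B ω) := by
      rintro ω ⟨hle, hu, -⟩
      have hineq : S ω₀ ≤ n := by
        have hag : ∀ i, 1 ≤ i → i ≤ S ω → X i ω = X i ω₀ := by
          intro i h1 h2
          have hi : i - 1 < n := by omega
          have e1 := hu ⟨i - 1, hi⟩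
          have e2 := h0 ⟨i - 1, hi⟩
          have he : i - 1 + 1 = i := by omega
          rw [he] at e1 e2
          rw [e1, e2]
        rw [hS ω ω₀ hag]
        exact hle
      omega
    exact Finset.sum_eq_zero fun ω _ => if_neg (hfalse ω)

lemma extN_ofFn {m : ℕ} (u : Fin m → 𝒳) (f : ℕ → 𝒳) :
    ExtN (List.ofFn u) f ↔ ∀ i : Fin m, f (i.1 + 1) = u i := by
  unfold ExtN
  constructor
  · intro h i
    have := h (Fin.cast (List.length_ofFn (f := u)).symm i)
    simpa [List.get_ofFn] using this
  · intro h i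
    have := h (Fin.cast (List.length_ofFn (f := u)) i)
    simp [List.get_ofFn] at this ⊢
    exact this

lemma jointProd [Fintype 𝒳] [Fintype 𝒴] [Nonempty 𝒳] [Nonempty 𝒴]
    (p : Ω → ℝ) (X : ℕ → Ω → 𝒳) (Y : ℕ → Ω → 𝒴) (κ : ℕ) (μ : 𝒳 × 𝒴 → ℝ)
    (hμ1 : ∑ z, μ z = 1)
    (hprod : ∀ (x : ℕ → 𝒳) (yf : ℕ → 𝒴),
      prW p (fun ω => ∀ i, 1 ≤ i → i ≤ κ → X i ω = x i ∧ Y i ω = yf i) =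
        ∏ i ∈ Finset.Icc 1 κ, μ (x i, yf i)) :
    ∀ (d m : ℕ), m + d = κ → ∀ (u : Fin m → 𝒳) (v : Fin m → 𝒴),
      prW p (fun ω => EqFn X u ω ∧ EqFn Y v ω) = ∏ i, μ (u i, v i) := by
  intro d
  induction d with
  | zero =>
    intro m hm u v
    have hmk : m = κ := by omega
    subst hmk
    set x : ℕ → 𝒳 := fun i =>
      if h : 1 ≤ i ∧ i ≤ m then u ⟨i - 1, by omega⟩ else Classical.arbitrary 𝒳 with hx
    set yf : ℕ → 𝒴 := fun i =>
      if h : 1 ≤ i ∧ i ≤ m then v ⟨i - 1, by omega⟩ else Classical.arbitrary 𝒴 with hyf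
    have hev : ∀ ω, (EqFn X u ω ∧ EqFn Y v ω) ↔
        (∀ i, 1 ≤ i → i ≤ m → X i ω = x i ∧ Y i ω = yf i) := by
      intro ω
      constructor
      · rintro ⟨hu, hv⟩ i h1 h2
        have hi : i - 1 < m := by omega
        have he : i - 1 + 1 = i := by omega
        have e1 := hu ⟨i - 1, hi⟩
        have e2 := hv ⟨i - 1, hi⟩
        rw [he] at e1 e2
        rw [hx, hyf]
        simp only [dif_pos (And.intro h1 h2)]
        exact ⟨e1, e2⟩
      · intro h
        constructor
        · intro i
          have := (h (i.1 + 1) (by omega) (by omega)).1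
          rw [hx] at this
          simp only [dif_pos (show 1 ≤ i.1 + 1 ∧ i.1 + 1 ≤ m by omega)] at this
          simpa using this
        · intro i
          have := (h (i.1 + 1) (by omega) (by omega)).2
          rw [hyf] at this
          simp only [dif_pos (show 1 ≤ i.1 + 1 ∧ i.1 + 1 ≤ m by omega)] at this
          simpa using this
    rw [prW_congr' p hev, hprod x yf]
    rw [← Finset.Ico_add_one_right_eq_Icc, Finset.prod_Ico_eq_prod_range]
    simp only [Nat.succ_sub_one, Nat.add_sub_cancel]
    rw [← Fin.prod_univ_eq_prod_range (fun i => μ (x (1 + i), yf (1 + i))) m]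
    refine Finset.prod_congr rfl fun i _ => ?_
    have hcond : 1 ≤ 1 + i.1 ∧ 1 + i.1 ≤ m := by omega
    rw [hx, hyf]
    simp only [dif_pos hcond]
    have hfin : (⟨1 + i.1 - 1, by omega⟩ : Fin m) = i := by
      apply Fin.ext
      show 1 + i.1 - 1 = i.1
      omega
    rw [hfin]
  | succ d ih =>
    intro m hm u v
    have hstep : prW p (fun ω => EqFn X u ω ∧ EqFn Y v ω)
        = ∑ z : 𝒳 × 𝒴,
            prW p (fun ω => EqFn X (Fin.snoc u z.1) ω ∧ EqFn Y (Fin.snoc v z.2) ω) := by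
      unfold prW
      rw [Finset.sum_comm]
      refine Finset.sum_congr rfl fun ω _ => ?_
      have hiff : ∀ z : 𝒳 × 𝒴,
          (EqFn X (Fin.snoc u z.1) ω ∧ EqFn Y (Fin.snoc v z.2) ω) ↔
            ((EqFn X u ω ∧ EqFn Y v ω) ∧ z = (X (m + 1) ω, Y (m + 1) ω)) := by
        rintro ⟨a, b⟩
        constructor
        · rintro ⟨hu, hv⟩
          refine ⟨⟨fun i => ?_, fun i => ?_⟩, ?_⟩
          · have := hu i.castSucc
            simpa [Fin.snoc_castSucc] using this
          · have := hv i.castSucc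
            simpa [Fin.snoc_castSucc] using this
          · have h1 := hu (Fin.last m)
            have h2 := hv (Fin.last m)
            rw [Fin.snoc_last] at h1
            rw [Fin.snoc_last] at h2
            simp only [Fin.val_last] at h1 h2
            simp [h1, h2]
        · rintro ⟨⟨hu, hv⟩, hz⟩
          obtain ⟨rfl, rfl⟩ : a = X (m + 1) ω ∧ b = Y (m + 1) ω := by
            constructor <;> · rw [Prod.ext_iff] at hz; simp at hz; tauto
          constructor
          · intro i
            induction i using Fin.lastCases with
            | last => rw [Fin.snoc_last]; rfl
            | cast j => simpa [Fin.snoc_castSucc] using hu j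
          · intro i
            induction i using Fin.lastCases with
            | last => rw [Fin.snoc_last]; rfl
            | cast j => simpa [Fin.snoc_castSucc] using hv j
      simp only [hiff]
      by_cases hE : EqFn X u ω ∧ EqFn Y v ω
      · simp only [hE, true_and]
        rw [Finset.sum_ite_eq' univ ((X (m + 1) ω, Y (m + 1) ω)) (fun _ => p ω)]
        simp
      · simp [hE]
    rw [hstep]
    have hz : ∀ z : 𝒳 × 𝒴,
        prW p (fun ω => EqFn X (Fin.snoc u z.1) ω ∧ EqFn Y (Fin.snoc v z.2) ω)
          = (∏ i, μ (u i, v i)) * μ z := by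
      rintro ⟨a, b⟩
      rw [ih (m + 1) (by omega) _ _, Fin.prod_univ_castSucc]
      simp [Fin.snoc_castSucc, Fin.snoc_last]
    rw [Finset.sum_congr rfl fun z _ => hz z, ← Finset.mul_sum, hμ1, mul_one]

end PermInvHelpers
/-- if `(X_i, Y_i)` are i.i.d. and `S` is a permutation invariant
stopping time w.r.t. `X`, then `S` is a permutation invariant (randomized)
stopping time w.r.t. `Y`. -/
theorem perm_inv_transfer
    {Ω 𝒳 𝒴 : Type*} [Fintype Ω] [Fintype 𝒳] [Fintype 𝒴]
    (p : Ω → ℝ) (hp : IsProbW p) (X : ℕ → Ω → 𝒳) (Y : ℕ → Ω → 𝒴) (κ : ℕ)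
    (hiid : IIDPairs p X Y κ)
    (S : Ω → ℕ) (hS : IsSTW X S) (hSb : ∀ ω, 1 ≤ S ω ∧ S ω ≤ κ)
    (hperm : PermInvST p X S κ) :
    PermInvST p Y S κ := by
  obtain ⟨μ, hμ0, hμ1, hprod⟩ := hiid
  intro y hn
  set n := y.length with hny
  intro π
  have hΩne : Nonempty Ω := by
    by_contra h
    rw [not_nonempty_iff] at h
    have h2 := hp.2
    rw [Finset.univ_eq_empty, Finset.sum_empty] at h2
    norm_num at h2
  obtain ⟨ω₀⟩ := hΩne
  have hX : Nonempty 𝒳 := ⟨X 0 ω₀⟩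
  have hY : Nonempty 𝒴 := ⟨Y 0 ω₀⟩
  set v : Fin n → 𝒴 := y.get with hvdef
  have hJ : ∀ (u : Fin n → 𝒳) (w : Fin n → 𝒴),
      prW p (fun ω => EqFn X u ω ∧ EqFn Y w ω) = ∏ i, μ (u i, w i) :=
    fun u w => jointProd p X Y κ μ hμ1 hprod (κ - n) n (by omega) u w
  set ind : (Fin n → 𝒳) → ℝ := fun u => if stopInd X S n u then 1 else 0 with hinddef
  have hN : ∀ w : Fin n → 𝒴,
      prW p (fun ω => S ω ≤ n ∧ EqFn Y w ω) = ∑ u : Fin n → 𝒳, ind u * ∏ i, μ (u i, w i) := by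
    intro w
    rw [prW_partition' p X n]
    refine Finset.sum_congr rfl fun u _ => ?_
    have e1 : prW p (fun ω => (S ω ≤ n ∧ EqFn Y w ω) ∧ EqFn X u ω)
        = prW p (fun ω => S ω ≤ n ∧ EqFn X u ω ∧ EqFn Y w ω) :=
      prW_congr' p fun ω => by tauto
    rw [e1, prW_stop_factor p X S hS n u (fun ω => EqFn Y w ω), hJ u w]
  have hD : ∀ w : Fin n → 𝒴,
      prW p (fun ω => EqFn Y w ω) = ∑ u : Fin n → 𝒳, ∏ i, μ (u i, w i) := by
    intro w
    rw [prW_partition' p X n]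
    refine Finset.sum_congr rfl fun u _ => ?_
    have e1 : prW p (fun ω => EqFn Y w ω ∧ EqFn X u ω)
        = prW p (fun ω => EqFn X u ω ∧ EqFn Y w ω) := prW_congr' p fun ω => by tauto
    rw [e1, hJ u w]
  have hDX : ∀ u : Fin n → 𝒳,
      prW p (fun ω => EqFn X u ω) = ∑ w : Fin n → 𝒴, ∏ i, μ (u i, w i) := by
    intro u
    rw [prW_partition' p Y n]
    refine Finset.sum_congr rfl fun w _ => ?_
    have e1 : prW p (fun ω => EqFn X u ω ∧ EqFn Y w ω)
        = prW p (fun ω => EqFn X u ω ∧ EqFn Y w ω) := rfl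
    rw [e1, hJ u w]
  have hNX : ∀ u : Fin n → 𝒳,
      prW p (fun ω => S ω ≤ n ∧ EqFn X u ω) = ind u * prW p (fun ω => EqFn X u ω) := by
    intro u
    have e1 : prW p (fun ω => S ω ≤ n ∧ EqFn X u ω)
        = prW p (fun ω => S ω ≤ n ∧ EqFn X u ω ∧ True) := prW_congr' p fun ω => by tauto
    have e2 : prW p (fun ω => EqFn X u ω ∧ True) = prW p (fun ω => EqFn X u ω) :=
      prW_congr' p fun ω => by tauto
    rw [e1, prW_stop_factor p X S hS n u (fun _ => True), e2]
  have hpermF : ∀ u : Fin n → 𝒳,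
      cprW p (fun ω => S ω ≤ n) (fun ω => EqFn X u ω)
        = cprW p (fun ω => S ω ≤ n) (fun ω => EqFn X (u ∘ π) ω) := by
    intro u
    have hlen : (List.ofFn u).length = n := List.length_ofFn (f := u)
    have h1 := hperm (List.ofFn u) (by rw [hlen]; exact hn) ((finCongr hlen).symm.permCongr π)
    have eA : ∀ ω, (S ω ≤ (List.ofFn u).length) ↔ (S ω ≤ n) := fun ω => by rw [hlen]
    have eB : ∀ ω, ExtN (List.ofFn u) (pathOf X ω) ↔ EqFn X u ω := fun ω =>
      extN_ofFn u (pathOf X ω)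
    have eC : ∀ ω, ExtN (permNode (List.ofFn u) ((finCongr hlen).symm.permCongr π)) (pathOf X ω)
        ↔ EqFn X (u ∘ π) ω := by
      intro ω
      have hext : ExtN (permNode (List.ofFn u) ((finCongr hlen).symm.permCongr π)) (pathOf X ω)
          ↔ ∀ i : Fin (List.ofFn u).length, pathOf X ω (i.1 + 1)
              = (List.ofFn u).get (((finCongr hlen).symm.permCongr π) i) :=
        extN_ofFn (fun i => (List.ofFn u).get (((finCongr hlen).symm.permCongr π) i))
          (pathOf X ω)
      rw [hext]
      have hget : ∀ i : Fin (List.ofFn u).length,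
          (List.ofFn u).get (((finCongr hlen).symm.permCongr π) i) = u (π (Fin.cast hlen i)) := by
        intro i
        rw [List.get_ofFn]
        have harg : Fin.cast (List.length_ofFn (f := u)) (((finCongr hlen).symm.permCongr π) i)
            = π (Fin.cast hlen i) := by
          rw [Equiv.permCongr_apply]
          have h3 : (finCongr hlen).symm.symm i = Fin.cast hlen i := by
            apply Fin.ext
            rfl
          rw [h3]
          apply Fin.ext
          rfl
        rw [harg]
      constructor
      · intro h j
        have h2 := h (Fin.cast hlen.symm j)
        rw [hget (Fin.cast hlen.symm j)] at h2
        have harg2 : Fin.cast hlen (Fin.cast hlen.symm j) = j := Fin.ext rfl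
        have hjj : π (Fin.cast hlen (Fin.cast hlen.symm j)) = π j := by rw [harg2]
        rw [hjj] at h2
        exact h2
      · intro h i
        have h2 := h (Fin.cast hlen i)
        rw [hget i]
        exact h2
    calc cprW p (fun ω => S ω ≤ n) (fun ω => EqFn X u ω)
        = cprW p (fun ω => S ω ≤ (List.ofFn u).length)
            (fun ω => ExtN (List.ofFn u) (pathOf X ω)) :=
          cprW_congr' p (fun ω => (eA ω).symm) (fun ω => (eB ω).symm)
      _ = cprW p (fun ω => S ω ≤ (List.ofFn u).length)
            (fun ω => ExtN (permNode (List.ofFn u) ((finCongr hlen).symm.permCongr π))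
              (pathOf X ω)) := h1
      _ = cprW p (fun ω => S ω ≤ n) (fun ω => EqFn X (u ∘ π) ω) :=
          cprW_congr' p (fun ω => eA ω) (fun ω => eC ω)
  have hkey : ∀ u : Fin n → 𝒳,
      ind (u ∘ π) * ∏ i, μ (u i, v i) = ind u * ∏ i, μ (u i, v i) := by
    intro u
    by_cases hz : ∏ i, μ (u i, v i) = 0
    · rw [hz, mul_zero, mul_zero]
    · have hpos : 0 < ∏ i, μ (u i, v i) :=
        lt_of_le_of_ne (Finset.prod_nonneg fun i _ => hμ0 _) (Ne.symm hz)
      have hDu : 0 < prW p (fun ω => EqFn X u ω) := by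
        rw [hDX u]
        exact lt_of_lt_of_le hpos (Finset.single_le_sum
          (f := fun w : Fin n → 𝒴 => ∏ i, μ (u i, w i))
          (fun w _ => Finset.prod_nonneg fun i _ => hμ0 _) (mem_univ v))
      have hDuπ : 0 < prW p (fun ω => EqFn X (u ∘ π) ω) := by
        rw [hDX (u ∘ π)]
        have h1 : (∏ i, μ ((u ∘ π) i, (v ∘ π) i)) = ∏ i, μ (u i, v i) :=
          Equiv.prod_comp π fun i => μ (u i, v i)
        refine lt_of_lt_of_le ?_ (Finset.single_le_sum
          (f := fun w : Fin n → 𝒴 => ∏ i, μ ((u ∘ π) i, w i))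
          (fun w _ => Finset.prod_nonneg fun i _ => hμ0 _) (mem_univ (v ∘ π)))
        show (0:ℝ) < ∏ i, μ ((u ∘ π) i, (v ∘ π) i)
        rw [h1]
        exact hpos
      have h2 := hpermF u
      have hnum1 : cprW p (fun ω => S ω ≤ n) (fun ω => EqFn X u ω)
          = ind u * prW p (fun ω => EqFn X u ω) / prW p (fun ω => EqFn X u ω) := by
        unfold cprW
        rw [← hNX u]
      have hnum2 : cprW p (fun ω => S ω ≤ n) (fun ω => EqFn X (u ∘ π) ω)
          = ind (u ∘ π) * prW p (fun ω => EqFn X (u ∘ π) ω)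
              / prW p (fun ω => EqFn X (u ∘ π) ω) := by
        unfold cprW
        rw [← hNX (u ∘ π)]
      rw [hnum1, hnum2, mul_div_assoc, mul_div_assoc, div_self (ne_of_gt hDu),
        div_self (ne_of_gt hDuπ), mul_one, mul_one] at h2
      rw [← h2]
  have hbij : Function.Bijective (fun u : Fin n → 𝒳 => u ∘ π) := by
    constructor
    · intro a b h
      funext i
      have := congrFun h (π.symm i)
      simpa using this
    · intro b
      refine ⟨b ∘ π.symm, funext fun i => ?_⟩
      simp
  have hprodswap : ∀ w : Fin n → 𝒳, ∏ i, μ ((w ∘ π) i, (v ∘ π) i) = ∏ i, μ (w i, v i) := by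
    intro w
    exact Equiv.prod_comp π fun i => μ (w i, v i)
  have hnum : (∑ u : Fin n → 𝒳, ind u * ∏ i, μ (u i, (v ∘ π) i))
      = ∑ u : Fin n → 𝒳, ind u * ∏ i, μ (u i, v i) := by
    have step1 : (∑ w : Fin n → 𝒳, ind (w ∘ π) * ∏ i, μ (w i, v i))
        = ∑ u : Fin n → 𝒳, ind u * ∏ i, μ (u i, (v ∘ π) i) := by
      refine Fintype.sum_bijective _ hbij _ _ fun w => ?_
      show ind (w ∘ π) * ∏ i, μ (w i, v i) = ind (w ∘ π) * ∏ i, μ ((w ∘ π) i, (v ∘ π) i)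
      rw [hprodswap w]
    rw [← step1]
    exact Finset.sum_congr rfl fun w _ => hkey w
  have hden : (∑ u : Fin n → 𝒳, ∏ i, μ (u i, (v ∘ π) i))
      = ∑ u : Fin n → 𝒳, ∏ i, μ (u i, v i) := by
    have step1 : (∑ w : Fin n → 𝒳, ∏ i, μ (w i, v i))
        = ∑ u : Fin n → 𝒳, ∏ i, μ (u i, (v ∘ π) i) := by
      refine Fintype.sum_bijective _ hbij _ _ fun w => ?_
      show (∏ i, μ (w i, v i)) = ∏ i, μ ((w ∘ π) i, (v ∘ π) i)
      rw [hprodswap w]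
    exact step1.symm
  have hgoal1 : cprW p (fun ω => S ω ≤ n) (fun ω => ExtN y (pathOf Y ω))
      = cprW p (fun ω => S ω ≤ n) (fun ω => EqFn Y v ω) :=
    cprW_congr' p (fun ω => Iff.rfl) (fun ω => Iff.rfl)
  have hgoal2 : cprW p (fun ω => S ω ≤ n) (fun ω => ExtN (permNode y π) (pathOf Y ω))
      = cprW p (fun ω => S ω ≤ n) (fun ω => EqFn Y (v ∘ π) ω) :=
    cprW_congr' p (fun ω => Iff.rfl) (fun ω => extN_ofFn (v ∘ π) (pathOf Y ω))
  rw [hgoal1, hgoal2]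
  show prW p (fun ω => S ω ≤ n ∧ EqFn Y v ω) / prW p (fun ω => EqFn Y v ω)
      = prW p (fun ω => S ω ≤ n ∧ EqFn Y (v ∘ π) ω) / prW p (fun ω => EqFn Y (v ∘ π) ω)
  rw [hN v, hN (v ∘ π), hD v, hD (v ∘ π), hnum, hden]
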